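/- For nonnegative integers α, β, γ with 1 - α - β + γ = 0 and a complex number c, the terminating basic hypergeometric series satisfies the q ↦ q^{-1} symmetry: ∑_{k=0}^{min(α,β)} ((q^{-α};q^{-1})_k (q^{-β};q^{-1})_k / ((q^{-1};q^{-1})_k (q^{-γ};q^{-1})_k)) c^k = ∑_{k=0}^{min(α,β)} ((q^{α};q)_k (q^{β};q)_k / ((q;q)_k (q^{γ};q)_k)) c^k, i.e., ₂φ₁(q^{-α}, q^{-β}; q^{-γ}; q^{-1}; c) = ₂φ₁(q^{α}, q^{β}; q^{γ}; q; c), provided no denominator vanishes. -/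

import Mathlib

/-- The q-Pochhammer symbol `(a;p)_k = ∏_{j=0}^{k-1} (1 - a p^j)`. -/
noncomputable def qPoch (a p : ℂ) (k : ℕ) : ℂ := ∏ j ∈ Finset.range k, (1 - a * p ^ j)

private lemma qPoch_neg_eq (q : ℂ) (hq : q ≠ 0) (a : ℤ) (k : ℕ) :
    qPoch (q ^ (-a)) q⁻¹ k =
      (∏ j ∈ Finset.range k, -(q ^ (-(a + j)))) * qPoch (q ^ a) q k := by
  unfold qPoch
  rw [← Finset.prod_mul_distrib]
  refine Finset.prod_congr rfl fun j _ => ?_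
  have h1 : q ^ (-a) * (q⁻¹) ^ j = q ^ (-(a + (j : ℤ))) := by
    rw [inv_pow, ← zpow_natCast q j, ← zpow_neg, ← zpow_add₀ hq, neg_add]
  have h2 : q ^ a * q ^ j = q ^ (a + (j : ℤ)) := by
    rw [← zpow_natCast q j, ← zpow_add₀ hq]
  have hs : q ^ (-(a + (j : ℤ))) * q ^ (a + (j : ℤ)) = 1 := by
    rw [← zpow_add₀ hq, neg_add_cancel, zpow_zero]
  rw [h1, h2]
  linear_combination (-1 : ℂ) * hs

private lemma prod_nonzero (q : ℂ) (hq : q ≠ 0) (a : ℤ) (k : ℕ) :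
    (∏ j ∈ Finset.range k, -(q ^ (-(a + (j:ℤ))))) ≠ 0 := by
  refine Finset.prod_ne_zero_iff.mpr fun j _ => ?_
  simp [zpow_ne_zero, hq]

/-- `q ↦ q⁻¹` symmetry of the terminating basic hypergeometric series: for
nonnegative integers `α, β, γ` with `1 - α - β + γ = 0` (i.e. `γ + 1 = α + β`),
`₂φ₁(q^{-α}, q^{-β}; q^{-γ}; q^{-1}; c) = ₂φ₁(q^{α}, q^{β}; q^{γ}; q; c)`,
provided no denominator vanishes. -/
theorem two_phi_one_q_inverse_symm (q c : ℂ) (hq : q ≠ 0) (α β γ : ℕ)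
    (hγ : γ + 1 = α + β)
    (hden : ∀ k ≤ min α β, qPoch q⁻¹ q⁻¹ k ≠ 0 ∧ qPoch (q ^ (-(γ : ℤ))) q⁻¹ k ≠ 0 ∧
      qPoch q q k ≠ 0 ∧ qPoch (q ^ (γ : ℤ)) q k ≠ 0) :
    (∑ k ∈ Finset.range (min α β + 1),
        qPoch (q ^ (-(α : ℤ))) q⁻¹ k * qPoch (q ^ (-(β : ℤ))) q⁻¹ k /
          (qPoch q⁻¹ q⁻¹ k * qPoch (q ^ (-(γ : ℤ))) q⁻¹ k) * c ^ k) =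
      ∑ k ∈ Finset.range (min α β + 1),
        qPoch (q ^ (α : ℤ)) q k * qPoch (q ^ (β : ℤ)) q k /
          (qPoch q q k * qPoch (q ^ (γ : ℤ)) q k) * c ^ k := by
  refine Finset.sum_congr rfl fun k hk => ?_
  have hk' : k ≤ min α β := Nat.lt_succ_iff.mp (Finset.mem_range.mp hk)
  obtain ⟨_, _, _, _⟩ := hden k hk'
  -- rewrite q⁻¹-Pochhammers
  have hq1 : qPoch q⁻¹ q⁻¹ k =
      (∏ j ∈ Finset.range k, -(q ^ (-(1 + (j:ℤ))))) * qPoch q q k := by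
    have := qPoch_neg_eq q hq 1 k
    simpa using this
  -- the prefactor identity
  have hpref : (∏ j ∈ Finset.range k, -(q ^ (-((α:ℤ) + (j:ℤ))))) *
      (∏ j ∈ Finset.range k, -(q ^ (-((β:ℤ) + (j:ℤ))))) =
      (∏ j ∈ Finset.range k, -(q ^ (-(1 + (j:ℤ))))) *
      (∏ j ∈ Finset.range k, -(q ^ (-((γ:ℤ) + (j:ℤ))))) := by
    rw [← Finset.prod_mul_distrib, ← Finset.prod_mul_distrib]
    refine Finset.prod_congr rfl fun j _ => ?_
    have h1 : q ^ (-((α:ℤ) + j)) * q ^ (-((β:ℤ) + j)) =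
        q ^ (-(1 + (j:ℤ))) * q ^ (-((γ:ℤ) + j)) := by
      rw [← zpow_add₀ hq, ← zpow_add₀ hq]
      congr 1
      have : (γ:ℤ) + 1 = (α:ℤ) + β := by exact_mod_cast hγ
      linarith
    linear_combination h1
  rw [qPoch_neg_eq q hq α k, qPoch_neg_eq q hq β k, qPoch_neg_eq q hq γ k, hq1]
  have h1 := prod_nonzero q hq 1 k
  have hg := prod_nonzero q hq γ k
  set Pa := ∏ j ∈ Finset.range k, -(q ^ (-((α:ℤ) + (j:ℤ)))) with hPa
  set Pb := ∏ j ∈ Finset.range k, -(q ^ (-((β:ℤ) + (j:ℤ)))) with hPb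
  set P1 := ∏ j ∈ Finset.range k, -(q ^ (-(1 + (j:ℤ)))) with hP1
  set Pg := ∏ j ∈ Finset.range k, -(q ^ (-((γ:ℤ) + (j:ℤ)))) with hPg
  congr 1
  rw [show Pa * qPoch (q ^ (α : ℤ)) q k * (Pb * qPoch (q ^ (β : ℤ)) q k)
      = (Pa * Pb) * (qPoch (q ^ (α : ℤ)) q k * qPoch (q ^ (β : ℤ)) q k) from by ring,
    hpref,
    show P1 * qPoch q q k * (Pg * qPoch (q ^ (γ : ℤ)) q k)
      = (P1 * Pg) * (qPoch q q k * qPoch (q ^ (γ : ℤ)) q k) from by ring,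
    mul_div_mul_left _ _ (mul_ne_zero h1 hg)]
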